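/- arXiv:1911.02192 — 3 statements merged into one kernel-verified Lean document; each statement's English description precedes it below -/
import Mathlib

section
/- If the design ξ* is D-optimal, i.e. det M(ξ*) ≥ det M(ξ) for every design ξ, then Tr( M(ξ*)⁻¹ M(ξ) ) ≤ p for every design ξ. -/
open MeasureTheory Matrix

/-- The information matrix `M(ξ) = ∫_X g(z) g(z)ᵀ dξ(z) + C` of a design `ξ`
(a Borel probability measure on `X ⊆ ℝ^d`), defined entrywise. -/
noncomputable def infoMatrix {d p : ℕ} {X : Set (Fin d → ℝ)}
    (g : (Fin d → ℝ) → Fin p → ℝ) (C : Matrix (Fin p) (Fin p) ℝ)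
    (ξ : Measure X) : Matrix (Fin p) (Fin p) ℝ :=
  Matrix.of fun i j => (∫ z, g (z : Fin d → ℝ) i * g (z : Fin d → ℝ) j ∂ξ) + C i j

/-- The prediction variance `d(z,ξ) = g(z)ᵀ M(ξ)⁻¹ g(z)`. -/
noncomputable def predVar {d p : ℕ} {X : Set (Fin d → ℝ)}
    (g : (Fin d → ℝ) → Fin p → ℝ) (C : Matrix (Fin p) (Fin p) ℝ)
    (ξ : Measure X) (z : Fin d → ℝ) : ℝ :=
  g z ⬝ᵥ ((infoMatrix g C ξ)⁻¹ *ᵥ g z)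

section AuxLemmas

variable {d p : ℕ} {X : Set (Fin d → ℝ)}

private lemma integrable_gg (hX : IsCompact X) {g : (Fin d → ℝ) → Fin p → ℝ}
    (hg : Continuous g) (ξ : Measure X) [IsFiniteMeasure ξ] (i j : Fin p) :
    Integrable (fun z : X => g (z : Fin d → ℝ) i * g (z : Fin d → ℝ) j) ξ := by
  haveI : CompactSpace X := isCompact_iff_compactSpace.mp hX
  have hcont : Continuous (fun z : X => g (z : Fin d → ℝ) i * g (z : Fin d → ℝ) j) :=
    (((continuous_apply i).comp hg).comp continuous_subtype_val).mul
      (((continuous_apply j).comp hg).comp continuous_subtype_val)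
  exact integrableOn_univ.mp (hcont.continuousOn.integrableOn_compact isCompact_univ)

private lemma intMat_posSemidef (hX : IsCompact X) {g : (Fin d → ℝ) → Fin p → ℝ}
    (hg : Continuous g) (ξ : Measure X) [IsFiniteMeasure ξ] :
    (Matrix.of fun i j =>
        ∫ z, g (z : Fin d → ℝ) i * g (z : Fin d → ℝ) j ∂ξ).PosSemidef := by
  refine Matrix.posSemidef_iff_dotProduct_mulVec.mpr ⟨?_, ?_⟩
  · ext i j
    simp only [conjTranspose_apply, of_apply, star_trivial]
    simp_rw [mul_comm]
  · intro x
    have hint : ∀ i j : Fin p, Integrable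
        (fun z : X => g (z : Fin d → ℝ) i * g (z : Fin d → ℝ) j * (x i * x j)) ξ :=
      fun i j => (integrable_gg hX hg ξ i j).mul_const _
    have hcalc : x ⬝ᵥ ((Matrix.of fun i j =>
        ∫ z, g (z : Fin d → ℝ) i * g (z : Fin d → ℝ) j ∂ξ) *ᵥ x)
        = ∫ z : X, (∑ i, x i * g (z : Fin d → ℝ) i) ^ 2 ∂ξ := by
      have h1 : x ⬝ᵥ ((Matrix.of fun i j =>
          ∫ z, g (z : Fin d → ℝ) i * g (z : Fin d → ℝ) j ∂ξ) *ᵥ x)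
          = ∑ i, ∑ j, ∫ z : X, g (z : Fin d → ℝ) i * g (z : Fin d → ℝ) j * (x i * x j) ∂ξ := by
        simp only [dotProduct, mulVec, of_apply]
        refine Finset.sum_congr rfl fun i _ => ?_
        rw [Finset.mul_sum]
        refine Finset.sum_congr rfl fun j _ => ?_
        rw [← integral_mul_const, ← integral_const_mul]
        refine integral_congr_ae (Filter.Eventually.of_forall fun z => ?_)
        ring
      have h2 : (∫ z : X, (∑ i, x i * g (z : Fin d → ℝ) i) ^ 2 ∂ξ)
          = ∫ z : X, ∑ i, ∑ j, g (z : Fin d → ℝ) i * g (z : Fin d → ℝ) j * (x i * x j) ∂ξ := by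
        refine integral_congr_ae (Filter.Eventually.of_forall fun z => ?_)
        dsimp only
        rw [sq, Finset.sum_mul_sum]
        refine Finset.sum_congr rfl fun i _ => Finset.sum_congr rfl fun j _ => ?_
        ring
      rw [h1, h2,
        integral_finset_sum _ (fun i _ => integrable_finset_sum _ (fun j _ => hint i j))]
      exact Finset.sum_congr rfl fun i _ => (integral_finset_sum _ fun j _ => hint i j).symm
    rw [star_trivial, hcalc]
    exact integral_nonneg fun z => sq_nonneg _

private lemma infoMatrix_posDef (hX : IsCompact X) {g : (Fin d → ℝ) → Fin p → ℝ}
    (hg : Continuous g) {C : Matrix (Fin p) (Fin p) ℝ} (hC : C.PosDef)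
    (ξ : Measure X) [IsFiniteMeasure ξ] : (infoMatrix g C ξ).PosDef := by
  have h : infoMatrix g C ξ = (Matrix.of fun i j =>
      ∫ z, g (z : Fin d → ℝ) i * g (z : Fin d → ℝ) j ∂ξ) + C := by
    ext i j; rfl
  rw [h]
  exact Matrix.PosDef.posSemidef_add (intMat_posSemidef hX hg ξ) hC

private lemma mix_prob (ξstar ξ : Measure X) [IsProbabilityMeasure ξstar]
    [IsProbabilityMeasure ξ] {t : ℝ} (ht0 : 0 ≤ t) (ht1 : t ≤ 1) :
    IsProbabilityMeasure (ENNReal.ofReal (1 - t) • ξstar + ENNReal.ofReal t • ξ) := by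
  constructor
  simp only [Measure.add_apply, Measure.smul_apply, smul_eq_mul, measure_univ, mul_one]
  rw [← ENNReal.ofReal_add (by linarith) ht0, sub_add_cancel, ENNReal.ofReal_one]

private lemma infoMatrix_mix (hX : IsCompact X) {g : (Fin d → ℝ) → Fin p → ℝ}
    (hg : Continuous g) (C : Matrix (Fin p) (Fin p) ℝ)
    (ξstar ξ : Measure X) [IsProbabilityMeasure ξstar] [IsProbabilityMeasure ξ]
    {t : ℝ} (ht0 : 0 ≤ t) (ht1 : t ≤ 1) :
    infoMatrix g C (ENNReal.ofReal (1 - t) • ξstar + ENNReal.ofReal t • ξ)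
      = infoMatrix g C ξstar + t • (infoMatrix g C ξ - infoMatrix g C ξstar) := by
  ext i j
  simp only [infoMatrix, of_apply, Matrix.add_apply, Matrix.smul_apply, Matrix.sub_apply,
    smul_eq_mul]
  rw [integral_add_measure
      ((integrable_gg hX hg ξstar i j).smul_measure ENNReal.ofReal_ne_top)
      ((integrable_gg hX hg ξ i j).smul_measure ENNReal.ofReal_ne_top),
    integral_smul_measure, integral_smul_measure,
    ENNReal.toReal_ofReal (by linarith), ENNReal.toReal_ofReal ht0]
  simp only [smul_eq_mul]
  ring

end AuxLemmas

/-- If `ξ*` is D-optimal then `Tr(M(ξ*)⁻¹ M(ξ)) ≤ p` for every design `ξ`. -/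
theorem trace_le_of_DOptimal {d p : ℕ} (hd : 1 ≤ d) (hp : 1 ≤ p)
    {X : Set (Fin d → ℝ)} (hX : IsCompact X)
    {g : (Fin d → ℝ) → Fin p → ℝ} (hg : Continuous g)
    {C : Matrix (Fin p) (Fin p) ℝ} (hC : C.PosDef)
    (ξstar : Measure X) [IsProbabilityMeasure ξstar]
    (hopt : ∀ ξ : Measure X, IsProbabilityMeasure ξ →
      (infoMatrix g C ξ).det ≤ (infoMatrix g C ξstar).det) :
    ∀ ξ : Measure X, IsProbabilityMeasure ξ →
      Matrix.trace ((infoMatrix g C ξstar)⁻¹ * infoMatrix g C ξ) ≤ (p : ℝ) := by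
  intro ξ hξ
  set A := infoMatrix g C ξstar with hAdef
  set B := infoMatrix g C ξ with hBdef
  have hA : A.PosDef := infoMatrix_posDef hX hg hC ξstar
  have hdetA : 0 < A.det := hA.det_pos
  have hAdet : IsUnit A.det := isUnit_iff_ne_zero.mpr (ne_of_gt hdetA)
  set M := A⁻¹ * (B - A) with hMdef
  set q := ((1 + (Polynomial.X : Polynomial ℝ) • M.map Polynomial.C).det).divX.divX with hqdef
  -- Key inequality for each t ∈ (0, 1]
  have key : ∀ t : ℝ, 0 < t → t ≤ 1 → Matrix.trace M ≤ -(q.eval t * t) := by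
    intro t ht0 ht1
    set μt := ENNReal.ofReal (1 - t) • ξstar + ENNReal.ofReal t • ξ with hμt
    haveI hprob := mix_prob ξstar ξ ht0.le ht1
    have hle := hopt μt hprob
    have hmix : infoMatrix g C μt = A + t • (B - A) :=
      infoMatrix_mix hX hg C ξstar ξ ht0.le ht1
    have hfact : A + t • (B - A) = A * (1 + t • M) := by
      rw [hMdef, Matrix.mul_add, mul_one, Matrix.mul_smul,
        Matrix.mul_nonsing_inv_cancel_left _ _ hAdet]
    have hdet : A.det * (1 + t • M).det ≤ A.det := by
      calc A.det * (1 + t • M).det = (A * (1 + t • M)).det := (Matrix.det_mul _ _).symm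
        _ = (infoMatrix g C μt).det := by rw [hmix, hfact]
        _ ≤ A.det := hle
    have h1 : (1 + t • M).det ≤ 1 := by
      nlinarith
    rw [Matrix.det_one_add_smul] at h1
    -- h1 : 1 + trace M * t + q.eval t * t ^ 2 ≤ 1
    have h2 : (Matrix.trace M + q.eval t * t) * t ≤ 0 * t := by nlinarith
    have h3 := le_of_mul_le_mul_right h2 ht0
    linarith
  -- Take the limit t → 0⁺
  have htr : Matrix.trace M ≤ 0 := by
    have hcont : Filter.Tendsto (fun t : ℝ => -(q.eval t * t)) (nhdsWithin 0 (Set.Ioi 0))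
        (nhds 0) := by
      have hc : Continuous fun t : ℝ => -(q.eval t * t) :=
        (q.continuous_aeval.mul continuous_id).neg
      have h := (hc.tendsto 0).mono_left (nhdsWithin_le_nhds (s := Set.Ioi (0 : ℝ)))
      simpa using h
    refine ge_of_tendsto hcont ?_
    filter_upwards [Ioo_mem_nhdsGT_of_mem (Set.mem_Ico.mpr ⟨le_refl 0, zero_lt_one⟩)] with t ht
    exact key t ht.1 ht.2.le
  -- Conclude
  have hinv : A⁻¹ * A = 1 := Matrix.nonsing_inv_mul A hAdet
  have hfin : A⁻¹ * B = M + 1 := by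
    rw [hMdef, Matrix.mul_sub, hinv, sub_add_cancel]
  rw [hfin, Matrix.trace_add, Matrix.trace_one]
  simp only [Fintype.card_fin]
  linarith
end

section
/- (Equivalence Theorem on manifolds, 1 ⇒ 3.) If the design ξ* is D-optimal, i.e. det M(ξ*) ≥ det M(ξ) for every design ξ, then its maximum prediction variance attains the lower bound: sup_{z ∈ X} d(z,ξ*) = p − Tr( M(ξ*)⁻¹ C ), where d(z,ξ*) = g(z)ᵀ M(ξ*)⁻¹ g(z). -/
open MeasureTheory Matrix Filter Topology Polynomial

/-- A continuous real function on a compact space is integrable w.r.t. a finite measure. -/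
lemma cont_integrable' {α : Type*} [MeasurableSpace α] [TopologicalSpace α]
    [OpensMeasurableSpace α] [CompactSpace α] (μ : Measure α) [IsFiniteMeasure μ]
    {f : α → ℝ} (hf : Continuous f) : Integrable f μ := by
  obtain ⟨c, hc⟩ := (isCompact_range hf).isBounded.exists_norm_le
  exact ⟨hf.aestronglyMeasurable,
    HasFiniteIntegral.of_bounded (C := c) (ae_of_all _ fun x => hc _ (Set.mem_range_self x))⟩

/-- trace of `B * uuᵀ` is the quadratic form `uᵀ B u`. -/
lemma trace_mul_vecMulVec' {n : ℕ} (B : Matrix (Fin n) (Fin n) ℝ) (u : Fin n → ℝ) :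
    Matrix.trace (B * Matrix.vecMulVec u u) = u ⬝ᵥ (B *ᵥ u) := by
  simp only [Matrix.trace, Matrix.diag_apply, Matrix.mul_apply, Matrix.vecMulVec_apply,
    dotProduct, Matrix.mulVec, Finset.mul_sum]
  exact Finset.sum_congr rfl fun i _ => Finset.sum_congr rfl fun j _ => by ring

/-- First-order optimality condition: if `det (A + α • B) ≤ det A` for all small positive `α`,
then `trace (A⁻¹ B) ≤ 0`. -/
lemma trace_nonpos_of_det_le' {n : ℕ} {A B : Matrix (Fin n) (Fin n) ℝ}
    (hA : A.PosDef) (h : ∀ α : ℝ, α ∈ Set.Ioc 0 1 → (A + α • B).det ≤ A.det) :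
    Matrix.trace (A⁻¹ * B) ≤ 0 := by
  set M := A⁻¹ * B with hM
  obtain ⟨Q, hQspec⟩ : ∃ Q : ℝ[X], ∀ r : ℝ,
      (1 + r • M).det = 1 + Matrix.trace M * r + Q.eval r * r ^ 2 :=
    ⟨_, fun r => Matrix.det_one_add_smul r M⟩
  have hAdet : IsUnit A.det := hA.det_pos.ne'.isUnit
  have key : ∀ α : ℝ, α ∈ Set.Ioc 0 1 → Matrix.trace M ≤ -(Q.eval α * α) := by
    intro α hα
    have hfac : A + α • B = A * (1 + α • M) := by
      rw [Matrix.mul_add, Matrix.mul_one, hM, Matrix.mul_smul, ← Matrix.mul_assoc,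
        Matrix.mul_nonsing_inv _ hAdet, Matrix.one_mul]
    have hdet := h α hα
    rw [hfac, Matrix.det_mul, hQspec α] at hdet
    have h2 : 1 + Matrix.trace M * α + Q.eval α * α ^ 2 ≤ 1 :=
      le_of_mul_le_mul_left (by rw [mul_one]; exact hdet) hA.det_pos
    nlinarith [hα.1, h2]
  have hQ0 : Tendsto (fun α : ℝ => -(Q.eval α * α)) (𝓝[>] (0 : ℝ)) (𝓝 0) := by
    have hcont : Continuous fun α : ℝ => -(Q.eval α * α) :=
      (Q.continuous_aeval.mul continuous_id).neg
    have h0 := (hcont.tendsto 0).mono_left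
      (nhdsWithin_le_nhds : 𝓝[>] (0:ℝ) ≤ 𝓝 0)
    simpa using h0
  refine ge_of_tendsto hQ0 ?_
  filter_upwards [Ioc_mem_nhdsGT (zero_lt_one : (0:ℝ) < 1)] with α hα
  exact key α hα

/-- Equivalence theorem on manifolds, 1 ⇒ 3: a D-optimal design attains the lower bound
for the maximum prediction variance, `sup_{z ∈ X} d(z,ξ*) = p − Tr(M(ξ*)⁻¹ C)`. -/
theorem iSup_predVar_of_DOptimal {d p : ℕ} (hd : 1 ≤ d) (hp : 1 ≤ p)
    {X : Set (Fin d → ℝ)} (hX : IsCompact X)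
    {g : (Fin d → ℝ) → Fin p → ℝ} (hg : Continuous g)
    {C : Matrix (Fin p) (Fin p) ℝ} (hC : C.PosDef)
    (ξstar : Measure X) [IsProbabilityMeasure ξstar]
    (hopt : ∀ ξ : Measure X, IsProbabilityMeasure ξ →
      (infoMatrix g C ξ).det ≤ (infoMatrix g C ξstar).det) :
    (⨆ z : X, predVar g C ξstar (z : Fin d → ℝ))
      = (p : ℝ) - Matrix.trace ((infoMatrix g C ξstar)⁻¹ * C) := by
  haveI : CompactSpace X := isCompact_iff_compactSpace.mp hX
  haveI : Nonempty X := by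
    by_contra hne
    rw [not_nonempty_iff] at hne
    have h1 : ξstar Set.univ = 1 := measure_univ
    rw [Set.univ_eq_empty_iff.mpr hne] at h1
    simp at h1
  -- continuity of the components of g on X
  have hgc : ∀ i, Continuous fun z : X => g (z : Fin d → ℝ) i :=
    fun i => ((continuous_apply i).comp hg).comp continuous_subtype_val
  -- integrability of products of components
  have hint : ∀ (ξ : Measure X), IsFiniteMeasure ξ → ∀ i j,
      Integrable (fun z : X => g (z : Fin d → ℝ) i * g (z : Fin d → ℝ) j) ξ := by
    intro ξ hξ i j
    haveI := hξ
    exact cont_integrable' ξ ((hgc i).mul (hgc j))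
  set M := infoMatrix g C ξstar with hMdef
  -- symmetry of M
  have hMentry : ∀ i j, M i j =
      (∫ z, g (z : Fin d → ℝ) i * g (z : Fin d → ℝ) j ∂ξstar) + C i j := fun i j => rfl
  have hCsym : ∀ i j, C j i = C i j := by
    intro i j
    conv_lhs => rw [← hC.1]
    simp [Matrix.conjTranspose_apply]
  have hMsym : ∀ i j, M j i = M i j := by
    intro i j
    rw [hMentry, hMentry, hCsym i j]
    congr 1
    exact integral_congr_ae (ae_of_all _ fun z => mul_comm _ _)
  have hMHerm : M.IsHermitian := by
    ext i j
    simp [Matrix.conjTranspose_apply, hMsym i j]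
  -- positive definiteness of M
  have hMpos : M.PosDef := by
    refine Matrix.PosDef.of_dotProduct_mulVec_pos hMHerm fun x hx => ?_
    have hsx : star x = x := by
      funext i; simp
    rw [hsx]
    have hsplit : x ⬝ᵥ (M *ᵥ x) =
        (∑ i, ∑ j, x i * x j * ∫ z, g (z : Fin d → ℝ) i * g (z : Fin d → ℝ) j ∂ξstar)
          + x ⬝ᵥ (C *ᵥ x) := by
      simp only [dotProduct, Matrix.mulVec, dotProduct, hMentry, Finset.mul_sum]
      rw [← Finset.sum_add_distrib]
      refine Finset.sum_congr rfl fun i _ => ?_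
      rw [← Finset.sum_add_distrib]
      exact Finset.sum_congr rfl fun j _ => by ring
    have hquad : (∑ i, ∑ j, x i * x j *
        ∫ z, g (z : Fin d → ℝ) i * g (z : Fin d → ℝ) j ∂ξstar)
        = ∫ z, (x ⬝ᵥ g (z : Fin d → ℝ)) ^ 2 ∂ξstar := by
      have hexp : ∀ z : X, (x ⬝ᵥ g (z : Fin d → ℝ)) ^ 2
          = ∑ i, ∑ j, x i * x j * (g (z : Fin d → ℝ) i * g (z : Fin d → ℝ) j) := by
        intro z
        rw [sq, dotProduct, Finset.sum_mul_sum]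
        exact Finset.sum_congr rfl fun i _ => Finset.sum_congr rfl fun j _ => by ring
      rw [integral_congr_ae (ae_of_all _ hexp),
        integral_finset_sum _ (fun i _ => integrable_finset_sum _
          (fun j _ => ((hint ξstar inferInstance i j).const_mul _))) ]
      refine Finset.sum_congr rfl fun i _ => ?_
      rw [integral_finset_sum _ (fun j _ => ((hint ξstar inferInstance i j).const_mul _))]
      exact Finset.sum_congr rfl fun j _ => (integral_const_mul _ _).symm
    rw [hsplit, hquad]
    have h1 : 0 ≤ ∫ z, (x ⬝ᵥ g (z : Fin d → ℝ)) ^ 2 ∂ξstar :=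
      integral_nonneg fun z => sq_nonneg _
    have h2 : 0 < x ⬝ᵥ (C *ᵥ x) := by
      have := hC.dotProduct_mulVec_pos hx
      have hsx2 : star x = x := by funext i; simp
      rwa [hsx2] at this
    linarith
  have hMdet : IsUnit M.det := hMpos.det_pos.ne'.isUnit
  have htrMM : Matrix.trace (M⁻¹ * M) = (p : ℝ) := by
    rw [Matrix.nonsing_inv_mul _ hMdet, Matrix.trace_one]
    simp
  -- the pointwise inequality from D-optimality
  have key : ∀ z : X, predVar g C ξstar (z : Fin d → ℝ) + Matrix.trace (M⁻¹ * C) ≤ (p : ℝ) := by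
    intro z
    set Mz := infoMatrix g C (Measure.dirac z) with hMzdef
    have hMz : Mz = Matrix.vecMulVec (g (z : Fin d → ℝ)) (g (z : Fin d → ℝ)) + C := by
      ext i j
      simp [hMzdef, infoMatrix, integral_dirac, Matrix.vecMulVec_apply]
    -- determinant inequality along the segment from ξ* to δ_z
    have hdetle : ∀ α : ℝ, α ∈ Set.Ioc 0 1 → (M + α • (Mz - M)).det ≤ M.det := by
      intro α hα
      set ν : Measure X :=
        ENNReal.ofReal (1 - α) • ξstar + ENNReal.ofReal α • Measure.dirac z with hν
      haveI hνP : IsProbabilityMeasure ν := by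
        constructor
        rw [hν]
        simp only [Measure.add_apply, Measure.smul_apply, measure_univ, smul_eq_mul, mul_one]
        rw [← ENNReal.ofReal_add (by linarith [hα.2]) hα.1.le]
        norm_num
      have hinfo : infoMatrix g C ν = M + α • (Mz - M) := by
        ext i j
        have hi1 := hint ξstar inferInstance i j
        have hi2 := hint (Measure.dirac z) inferInstance i j
        have hI : (∫ w, g (w : Fin d → ℝ) i * g (w : Fin d → ℝ) j ∂ν)
            = (1 - α) * (∫ w, g (w : Fin d → ℝ) i * g (w : Fin d → ℝ) j ∂ξstar)
              + α * (g (z : Fin d → ℝ) i * g (z : Fin d → ℝ) j) := by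
          rw [hν, integral_add_measure (hi1.smul_measure ENNReal.ofReal_ne_top)
            (hi2.smul_measure ENNReal.ofReal_ne_top), integral_smul_measure,
            integral_smul_measure, integral_dirac,
            ENNReal.toReal_ofReal (by linarith [hα.2]), ENNReal.toReal_ofReal hα.1.le]
          simp [smul_eq_mul]
        show (∫ w, g (w : Fin d → ℝ) i * g (w : Fin d → ℝ) j ∂ν) + C i j
            = M i j + α * (Mz i j - M i j)
        rw [hI, hMentry i j, hMz]
        simp only [Matrix.add_apply, Matrix.vecMulVec_apply]
        ring
      have := hopt ν hνP
      rwa [hinfo] at this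
    have htr := trace_nonpos_of_det_le' hMpos hdetle
    rw [Matrix.mul_sub, Matrix.trace_sub, sub_nonpos] at htr
    have htrMz : Matrix.trace (M⁻¹ * Mz)
        = predVar g C ξstar (z : Fin d → ℝ) + Matrix.trace (M⁻¹ * C) := by
      rw [hMz, Matrix.mul_add, Matrix.trace_add, trace_mul_vecMulVec']
      rfl
    rw [htrMz, htrMM] at htr
    exact htr
  -- continuity and integrability of the prediction variance
  have hpv : ∀ z : X, predVar g C ξstar (z : Fin d → ℝ)
      = ∑ i, ∑ j, M⁻¹ i j * (g (z : Fin d → ℝ) i * g (z : Fin d → ℝ) j) := by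
    intro z
    simp only [predVar, dotProduct, Matrix.mulVec, dotProduct, Finset.mul_sum, ← hMdef]
    exact Finset.sum_congr rfl fun i _ => Finset.sum_congr rfl fun j _ => by ring
  have hpvcont : Continuous fun z : X => predVar g C ξstar (z : Fin d → ℝ) := by
    have : Continuous fun z : X =>
        ∑ i, ∑ j, M⁻¹ i j * (g (z : Fin d → ℝ) i * g (z : Fin d → ℝ) j) := by
      refine continuous_finset_sum _ fun i _ => continuous_finset_sum _ fun j _ => ?_
      exact continuous_const.mul ((hgc i).mul (hgc j))
    convert this using 1
    funext z
    exact hpv z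
  have hpvint : Integrable (fun z : X => predVar g C ξstar (z : Fin d → ℝ)) ξstar :=
    cont_integrable' ξstar hpvcont
  -- the average of the prediction variance
  have havg : (∫ z, predVar g C ξstar (z : Fin d → ℝ) ∂ξstar)
      = (p : ℝ) - Matrix.trace (M⁻¹ * C) := by
    have h1 : (∫ z, predVar g C ξstar (z : Fin d → ℝ) ∂ξstar)
        = ∑ i, ∑ j, M⁻¹ i j * ∫ z, g (z : Fin d → ℝ) i * g (z : Fin d → ℝ) j ∂ξstar := by
      rw [integral_congr_ae (ae_of_all _ hpv),
        integral_finset_sum _ (fun i _ => integrable_finset_sum _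
          (fun j _ => ((hint ξstar inferInstance i j).const_mul (M⁻¹ i j))))]
      refine Finset.sum_congr rfl fun i _ => ?_
      rw [integral_finset_sum _ (fun j _ => ((hint ξstar inferInstance i j).const_mul (M⁻¹ i j)))]
      exact Finset.sum_congr rfl fun j _ => integral_const_mul _ _
    have h2 : Matrix.trace (M⁻¹ * M) - Matrix.trace (M⁻¹ * C)
        = ∑ i, ∑ j, M⁻¹ i j * ∫ z, g (z : Fin d → ℝ) i * g (z : Fin d → ℝ) j ∂ξstar := by
      rw [← Matrix.trace_sub, ← Matrix.mul_sub]
      simp only [Matrix.trace, Matrix.diag_apply, Matrix.mul_apply, Matrix.sub_apply]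
      refine Finset.sum_congr rfl fun i _ => Finset.sum_congr rfl fun j _ => ?_
      rw [hMsym i j, hCsym i j, hMentry i j]
      ring
    rw [h1, ← h2, htrMM]
  set K := (p : ℝ) - Matrix.trace (M⁻¹ * C) with hK
  have hub : ∀ z : X, predVar g C ξstar (z : Fin d → ℝ) ≤ K := by
    intro z
    have := key z
    rw [hK]
    linarith
  have hbdd : BddAbove (Set.range fun z : X => predVar g C ξstar (z : Fin d → ℝ)) := by
    refine ⟨K, ?_⟩
    rintro _ ⟨z, rfl⟩
    exact hub z
  have hle : (⨆ z : X, predVar g C ξstar (z : Fin d → ℝ)) ≤ K := ciSup_le hub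
  have hge : K ≤ ⨆ z : X, predVar g C ξstar (z : Fin d → ℝ) := by
    rw [← havg]
    calc (∫ z, predVar g C ξstar (z : Fin d → ℝ) ∂ξstar)
        ≤ ∫ _z, (⨆ z : X, predVar g C ξstar (z : Fin d → ℝ)) ∂ξstar :=
          integral_mono hpvint (integrable_const _) fun z => le_ciSup hbdd z
      _ = ⨆ z : X, predVar g C ξstar (z : Fin d → ℝ) := by
          simp [integral_const]
  exact le_antisymm hle hge
end

section
/- (Equivalence Theorem on manifolds, 3 ⇒ 1.) If a design ξ* satisfies sup_{z ∈ X} d(z,ξ*) = p − Tr( M(ξ*)⁻¹ C ), where d(z,ξ*) = g(z)ᵀ M(ξ*)⁻¹ g(z), then ξ* is D-optimal: det M(ξ*) ≥ det M(ξ) for every design ξ. -/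
open MeasureTheory Matrix

lemma trace_eq_sum_eigenvalues {p : ℕ} {S : Matrix (Fin p) (Fin p) ℝ}
    (hS : S.IsHermitian) : S.trace = ∑ i, hS.eigenvalues i := by
  simpa using hS.trace_eq_sum_eigenvalues

open scoped MatrixOrder in
lemma det_le_det_of_trace_le {p : ℕ} (hp : 1 ≤ p) {A B : Matrix (Fin p) (Fin p) ℝ}
    (hA : A.PosDef) (hB : B.PosDef) (h : (A⁻¹ * B).trace ≤ (p : ℝ)) :
    B.det ≤ A.det := by
  set R := CFC.sqrt A with hR
  have hRS : R.PosSemidef := (CFC.sqrt_nonneg A).posSemidef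
  have hRR : R * R = A := CFC.sqrt_mul_sqrt_self A hA.posSemidef.nonneg
  have hRinv : R⁻¹.IsHermitian := hRS.isHermitian.inv
  set S := R⁻¹ * B * R⁻¹ with hSdef
  have hSps : S.PosSemidef := by
    have := hB.posSemidef.mul_mul_conjTranspose_same R⁻¹
    rwa [hRinv.eq] at this
  have hAinv : R⁻¹ * R⁻¹ = A⁻¹ := by rw [← Matrix.mul_inv_rev, hRR]
  have htrS : S.trace = (A⁻¹ * B).trace := by
    rw [hSdef, Matrix.trace_mul_cycle, hAinv]
  have hdetS : S.det = A⁻¹.det * B.det := by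
    rw [hSdef, det_mul, det_mul, mul_comm, ← mul_assoc, ← det_mul, hAinv]
  -- eigenvalues of S
  set lam := hSps.isHermitian.eigenvalues with hlam
  have hlam_nonneg : ∀ i, 0 ≤ lam i := hSps.eigenvalues_nonneg
  have hsum : ∑ i, lam i ≤ (p : ℝ) := by
    rw [← trace_eq_sum_eigenvalues hSps.isHermitian, htrS]; exact h
  have hprod : S.det = ∏ i, lam i := by
    have := hSps.isHermitian.det_eq_prod_eigenvalues
    simpa using this
  have hp0 : (0:ℝ) < p := by exact_mod_cast hp
  -- AM-GM
  have hgm : ∏ i, (lam i) ^ ((p:ℝ)⁻¹) ≤ ∑ i : Fin p, (p:ℝ)⁻¹ * lam i := by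
    apply Real.geom_mean_le_arith_mean_weighted
    · intro i _; positivity
    · simp [Finset.card_univ]; field_simp
    · intro i _; exact hlam_nonneg i
  have hrhs : ∑ i : Fin p, (p:ℝ)⁻¹ * lam i ≤ 1 := by
    rw [← Finset.mul_sum]
    rw [inv_mul_le_iff₀ hp0, mul_one]
    exact hsum
  have hprod_le_one : ∏ i, lam i ≤ 1 := by
    have hbase : (0:ℝ) ≤ ∏ i, (lam i) ^ ((p:ℝ)⁻¹) :=
      Finset.prod_nonneg fun i _ => Real.rpow_nonneg (hlam_nonneg i) _
    have hpow : (∏ i, (lam i) ^ ((p:ℝ)⁻¹)) ^ (p:ℕ) ≤ 1 ^ (p:ℕ) :=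
      pow_le_pow_left₀ hbase (hgm.trans hrhs) _
    rw [one_pow, ← Finset.prod_pow] at hpow
    convert hpow using 2 with i
    rw [← Real.rpow_natCast ((lam i) ^ ((p:ℝ)⁻¹)) p, ← Real.rpow_mul (hlam_nonneg i)]
    rw [inv_mul_cancel₀ (ne_of_gt hp0), Real.rpow_one]
  -- conclude
  have hdetS1 : S.det ≤ 1 := by rw [hprod]; exact hprod_le_one
  have hAinvdet : A⁻¹.det = A.det⁻¹ := by rw [Matrix.det_nonsing_inv]; simp [Ring.inverse_eq_inv']
  have := hdetS1
  rw [hdetS, hAinvdet] at this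
  calc B.det = A.det * (A.det⁻¹ * B.det) := by
        rw [← mul_assoc, mul_inv_cancel₀ hA.det_pos.ne', one_mul]
    _ ≤ A.det * 1 := mul_le_mul_of_nonneg_left this (le_of_lt hA.det_pos)
    _ = A.det := mul_one _

/-- Equivalence theorem on manifolds, 3 ⇒ 1: a design whose maximum prediction variance
equals `p − Tr(M(ξ*)⁻¹ C)` is D-optimal. -/
theorem DOptimal_of_iSup_predVar {d p : ℕ} (hd : 1 ≤ d) (hp : 1 ≤ p)
    {X : Set (Fin d → ℝ)} (hX : IsCompact X)
    {g : (Fin d → ℝ) → Fin p → ℝ} (hg : Continuous g)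
    {C : Matrix (Fin p) (Fin p) ℝ} (hC : C.PosDef)
    (ξstar : Measure X) [IsProbabilityMeasure ξstar]
    (hsup : (⨆ z : X, predVar g C ξstar (z : Fin d → ℝ))
      = (p : ℝ) - Matrix.trace ((infoMatrix g C ξstar)⁻¹ * C)) :
    ∀ ξ : Measure X, IsProbabilityMeasure ξ →
      (infoMatrix g C ξ).det ≤ (infoMatrix g C ξstar).det := by
  intro ξ hξ
  haveI := hξ
  haveI : CompactSpace X := isCompact_iff_compactSpace.mp hX
  have hne : Nonempty X := by
    by_contra h
    rw [not_nonempty_iff] at h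
    have h1 : ξstar Set.univ = 1 := measure_univ
    rw [Set.univ_eq_empty_iff.mpr h, measure_empty] at h1
    exact zero_ne_one h1
  have hgc : ∀ i : Fin p, Continuous fun z : X => g (z : Fin d → ℝ) i :=
    fun i => ((continuous_apply i).comp hg).comp continuous_subtype_val
  have hint : ∀ (μ : Measure X) [IsProbabilityMeasure μ] (i j : Fin p),
      Integrable (fun z : X => g (z : Fin d → ℝ) i * g (z : Fin d → ℝ) j) μ := by
    intro μ _ i j
    exact ((hgc i).mul (hgc j)).integrable_of_hasCompactSupport
      (HasCompactSupport.of_compactSpace _)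
  have hPD : ∀ (μ : Measure X) [IsProbabilityMeasure μ], (infoMatrix g C μ).PosDef := by
    intro μ _
    have hMat : (Matrix.of fun i j => ∫ z, g (z : Fin d → ℝ) i * g (z : Fin d → ℝ) j ∂μ
        : Matrix (Fin p) (Fin p) ℝ).PosSemidef := by
      refine Matrix.PosSemidef.of_dotProduct_mulVec_nonneg ?_ ?_
      · ext i j
        simp only [conjTranspose_apply, Matrix.of_apply, star_trivial]
        simp_rw [mul_comm]
      · intro x
        have hswap : star x ⬝ᵥ ((Matrix.of fun i j =>
              ∫ z, g (z : Fin d → ℝ) i * g (z : Fin d → ℝ) j ∂μ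
              : Matrix (Fin p) (Fin p) ℝ) *ᵥ x)
            = ∫ z, (∑ i, x i * g (z : Fin d → ℝ) i) * (∑ j, x j * g (z : Fin d → ℝ) j) ∂μ := by
          calc star x ⬝ᵥ ((Matrix.of fun i j =>
                  ∫ z, g (z : Fin d → ℝ) i * g (z : Fin d → ℝ) j ∂μ
                  : Matrix (Fin p) (Fin p) ℝ) *ᵥ x)
              = ∑ i, ∑ j, ∫ z, (x i * x j) * (g (z : Fin d → ℝ) i * g (z : Fin d → ℝ) j) ∂μ := by
                simp only [dotProduct, mulVec, Matrix.of_apply, Finset.mul_sum, star_trivial]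
                refine Finset.sum_congr rfl fun i _ => Finset.sum_congr rfl fun j _ => ?_
                rw [integral_const_mul]
                ring
            _ = ∫ z, ∑ i, ∑ j, (x i * x j) * (g (z : Fin d → ℝ) i * g (z : Fin d → ℝ) j) ∂μ := by
                rw [integral_finset_sum _ (fun i _ => integrable_finset_sum _
                  (fun j _ => (hint μ i j).const_mul _))]
                exact Finset.sum_congr rfl fun i _ =>
                  (integral_finset_sum _ fun j _ => (hint μ i j).const_mul _).symm
            _ = ∫ z, (∑ i, x i * g (z : Fin d → ℝ) i) * (∑ j, x j * g (z : Fin d → ℝ) j) ∂μ := by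
                congr 1; funext z
                rw [Finset.sum_mul_sum]
                exact Finset.sum_congr rfl fun i _ => Finset.sum_congr rfl fun j _ => by ring
        rw [hswap]
        exact integral_nonneg fun z => mul_self_nonneg _
    have hsplit : infoMatrix g C μ
        = (Matrix.of fun i j => ∫ z, g (z : Fin d → ℝ) i * g (z : Fin d → ℝ) j ∂μ) + C := by
      ext i j; rfl
    rw [hsplit]
    exact Matrix.PosDef.posSemidef_add hMat hC
  have hApd := hPD ξstar
  have hBpd := hPD ξ
  set A := infoMatrix g C ξstar with hAdef
  have hpv : ∀ w : Fin d → ℝ, predVar g C ξstar w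
      = ∑ i, ∑ j, A⁻¹ i j * (g w i * g w j) := by
    intro w
    simp only [predVar, dotProduct, mulVec, Finset.mul_sum, ← hAdef]
    exact Finset.sum_congr rfl fun i _ => Finset.sum_congr rfl fun j _ => by ring
  have hFc : Continuous fun z : X => predVar g C ξstar (z : Fin d → ℝ) := by
    have heq : (fun z : X => predVar g C ξstar (z : Fin d → ℝ))
        = fun z : X => ∑ i, ∑ j, A⁻¹ i j * (g (z : Fin d → ℝ) i * g (z : Fin d → ℝ) j) :=
      funext fun z => hpv _
    rw [heq]
    exact continuous_finset_sum _ fun i _ => continuous_finset_sum _ fun j _ =>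
      continuous_const.mul ((hgc i).mul (hgc j))
  have hFint : Integrable (fun z : X => predVar g C ξstar (z : Fin d → ℝ)) ξ :=
    hFc.integrable_of_hasCompactSupport (HasCompactSupport.of_compactSpace _)
  have hbdd : BddAbove (Set.range fun z : X => predVar g C ξstar (z : Fin d → ℝ)) :=
    (isCompact_range hFc).bddAbove
  have hle_sup : ∫ z, predVar g C ξstar (z : Fin d → ℝ) ∂ξ
      ≤ ⨆ z : X, predVar g C ξstar (z : Fin d → ℝ) := by
    calc ∫ z, predVar g C ξstar (z : Fin d → ℝ) ∂ξ
        ≤ ∫ _z, (⨆ z : X, predVar g C ξstar (z : Fin d → ℝ)) ∂ξ :=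
          integral_mono hFint (integrable_const _) fun z => le_ciSup hbdd z
      _ = ⨆ z : X, predVar g C ξstar (z : Fin d → ℝ) := by simp
  have htrMat : (A⁻¹ * (Matrix.of fun i j =>
        ∫ z, g (z : Fin d → ℝ) i * g (z : Fin d → ℝ) j ∂ξ : Matrix (Fin p) (Fin p) ℝ)).trace
      = ∫ z, predVar g C ξstar (z : Fin d → ℝ) ∂ξ := by
    simp only [Matrix.trace, Matrix.diag, Matrix.mul_apply, Matrix.of_apply]
    calc ∑ i, ∑ j, A⁻¹ i j * ∫ z, g (z : Fin d → ℝ) j * g (z : Fin d → ℝ) i ∂ξ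
        = ∑ i, ∑ j, ∫ z, A⁻¹ i j * (g (z : Fin d → ℝ) i * g (z : Fin d → ℝ) j) ∂ξ := by
          refine Finset.sum_congr rfl fun i _ => Finset.sum_congr rfl fun j _ => ?_
          rw [integral_const_mul]
          congr 1
          exact integral_congr_ae (Filter.Eventually.of_forall fun z => by ring)
      _ = ∫ z, ∑ i, ∑ j, A⁻¹ i j * (g (z : Fin d → ℝ) i * g (z : Fin d → ℝ) j) ∂ξ := by
          rw [integral_finset_sum _ (fun i _ => integrable_finset_sum _
            (fun j _ => (hint ξ i j).const_mul (A⁻¹ i j)))]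
          exact Finset.sum_congr rfl fun i _ =>
            (integral_finset_sum _ fun j _ => (hint ξ i j).const_mul _).symm
      _ = ∫ z, predVar g C ξstar (z : Fin d → ℝ) ∂ξ := by
          congr 1; funext z; rw [hpv]
  have hsplitξ : infoMatrix g C ξ
      = (Matrix.of fun i j => ∫ z, g (z : Fin d → ℝ) i * g (z : Fin d → ℝ) j ∂ξ) + C := by
    ext i j; rfl
  have htr : (A⁻¹ * infoMatrix g C ξ).trace
      = (∫ z, predVar g C ξstar (z : Fin d → ℝ) ∂ξ) + (A⁻¹ * C).trace := by
    rw [hsplitξ, mul_add, Matrix.trace_add, htrMat]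
  have hfinal : (A⁻¹ * infoMatrix g C ξ).trace ≤ (p : ℝ) := by
    rw [htr]
    have h2 := hle_sup.trans_eq hsup
    linarith
  exact det_le_det_of_trace_le hp hApd hBpd hfinal
end
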